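/- Let T be an almost linear tree order on an ordinal θ, i.e. (a) for every successor ordinal α+1 < θ the immediate T-predecessor of α+1 lies in the branch [0,α]_T (the set of T-predecessors of α together with α itself), and (b) every node has only finitely many immediate T-successors. Then for every limit ordinal λ ≤ θ the restriction of T to λ has exactly one cofinal branch, namely the branch obtained by recursively choosing, at each node, the largest (as an ordinal) immediate T-successor, and closing under taking limits along cofinal subsets. -/

import Mathlib

open Set

/-- A tree order on an ordinal `θ`. -/
structure TreeOrder (θ : Ordinal) (T : Ordinal → Ordinal → Prop) : Prop where
  lt_of_rel : ∀ {β α : Ordinal}, T β α → β < α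
  lt_dom : ∀ {β α : Ordinal}, T β α → α < θ
  zero_rel : ∀ α : Ordinal, 0 < α → α < θ → T 0 α
  rel_trans : ∀ {γ β α : Ordinal}, T γ β → T β α → T γ α
  linear_pred : ∀ {α β γ : Ordinal}, T β α → T γ α → β = γ ∨ T β γ ∨ T γ β
  succ_pred : ∀ α : Ordinal, α + 1 < θ →
    ∃ β, T β (α + 1) ∧ ∀ γ, T γ (α + 1) → γ = β ∨ T γ β
  limit_cofinal : ∀ lam : Ordinal, lam < θ → Order.IsSuccLimit lam →
    ∀ β < lam, ∃ γ, β ≤ γ ∧ T γ lam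

/-- `β` is the immediate `T`-predecessor of `α`. -/
def ImmPred (T : Ordinal → Ordinal → Prop) (β α : Ordinal) : Prop :=
  T β α ∧ ∀ γ, T β γ → T γ α → False

/-- Almost linearity: the immediate predecessor of a successor node `α+1`
lies in `[0,α]_T`, and every node has only finitely many immediate successors. -/
def AlmostLinear (θ : Ordinal) (T : Ordinal → Ordinal → Prop) : Prop :=
  (∀ α : Ordinal, α + 1 < θ → ∀ β, ImmPred T β (α + 1) → β = α ∨ T β α) ∧
  (∀ i : Ordinal, {α : Ordinal | ImmPred T i α}.Finite)

/-- A cofinal branch of `T` restricted to `lam`. -/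
def IsCofinalBranch (lam : Ordinal) (T : Ordinal → Ordinal → Prop)
    (b : Set Ordinal) : Prop :=
  (∀ α ∈ b, α < lam) ∧
  (∀ α ∈ b, ∀ β ∈ b, α = β ∨ T α β ∨ T β α) ∧
  (∀ α ∈ b, ∀ β, T β α → β ∈ b) ∧
  (∀ β < lam, ∃ γ ∈ b, β ≤ γ)

section Aux

variable {θ : Ordinal} {T : Ordinal → Ordinal → Prop}

/-- Any predecessor of `α+1` is `α` itself or a predecessor of `α`. -/
lemma predSucc (hT : TreeOrder θ T) (hAL : AlmostLinear θ T)
    {α β : Ordinal} (h1 : α + 1 < θ) (h2 : T β (α + 1)) : β = α ∨ T β α := by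
  obtain ⟨β₀, hβ₀, hmax⟩ := hT.succ_pred α h1
  have hImm : ImmPred T β₀ (α + 1) := by
    refine ⟨hβ₀, fun γ hg1 hg2 => ?_⟩
    rcases hmax γ hg2 with rfl | h
    · exact absurd (hT.lt_of_rel hg1) (lt_irrefl _)
    · exact absurd (hT.lt_of_rel (hT.rel_trans hg1 h)) (lt_irrefl _)
  have h₀ := hAL.1 α h1 β₀ hImm
  rcases hmax β h2 with rfl | h
  · exact h₀
  · rcases h₀ with rfl | h'
    · exact Or.inr h
    · exact Or.inr (hT.rel_trans h h')

/-- The interval lemma: if `β T α` and `β < γ ≤ α` then `β T γ`. -/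
lemma interval (hT : TreeOrder θ T) (hAL : AlmostLinear θ T) :
    ∀ α β γ : Ordinal, T β α → β < γ → γ ≤ α → T β γ := by
  intro α
  induction α using Ordinal.induction with
  | h α IH =>
    intro β γ hβα hβγ hγα
    rcases eq_or_lt_of_le hγα with rfl | hγα'
    · exact hβα
    rcases Ordinal.zero_or_succ_or_isSuccLimit α with rfl | ⟨δ, rfl⟩ | hlim
    · exact absurd (hT.lt_of_rel hβα) (not_lt_of_ge zero_le)
    · have h1 : δ + 1 < θ := by
        rw [Ordinal.add_one_eq_succ]; exact hT.lt_dom hβα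
      have h2 : T β (δ + 1) := by rwa [Ordinal.add_one_eq_succ]
      have hγδ : γ ≤ δ := Order.lt_succ_iff.mp hγα'
      rcases predSucc hT hAL h1 h2 with rfl | h
      · exact absurd hβγ (not_lt.2 hγδ)
      · exact IH δ (Order.lt_succ δ) β γ h hβγ hγδ
    · have hαθ : α < θ := hT.lt_dom hβα
      obtain ⟨δ, hγδ, hδα⟩ := hT.limit_cofinal α hαθ hlim γ hγα'
      rcases hT.linear_pred hβα hδα with rfl | h | h
      · exact absurd hγδ (not_le.2 hβγ)
      · exact IH δ (hT.lt_of_rel hδα) β γ h hβγ hγδ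
      · exact absurd (hγδ.trans_lt (hT.lt_of_rel h)) (not_lt.2 hβγ.le)

/-- The canonical branch below `lam`: all nodes below every later node. -/
def Bset (lam : Ordinal) (T : Ordinal → Ordinal → Prop) : Set Ordinal :=
  {β | β < lam ∧ ∀ γ, β < γ → γ < lam → T β γ}

/-- Key step: a node `s` which is a limit of members of `Bset` from below is
itself `T`-below every `γ ∈ (s, lam)`. -/
lemma key (hT : TreeOrder θ T) (hAL : AlmostLinear θ T) {lam : Ordinal}
    (hlam : lam ≤ θ) {s γ : Ordinal}
    (hs0 : 0 < s) (hsγ : s < γ) (hγ : γ < lam)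
    (H : ∀ η < s, ∃ β ∈ Bset lam T, η < β ∧ β < s) : T s γ := by
  set M : Set Ordinal := {δ | (T δ γ ∨ δ = γ) ∧ s ≤ δ} with hMdef
  have hMne : M.Nonempty := ⟨γ, Or.inr rfl, hsγ.le⟩
  obtain ⟨m, hmM, hmin⟩ : ∃ m ∈ M, ∀ δ ∈ M, ¬ δ < m :=
    ⟨_, Ordinal.lt_wf.min_mem M hMne, fun δ h => Ordinal.lt_wf.not_lt_min M h⟩
  obtain ⟨hmγ, hsm⟩ := hmM
  have hmγ' : m ≤ γ := by
    rcases hmγ with h | rfl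
    · exact (hT.lt_of_rel h).le
    · exact le_rfl
  have hPm : ∀ δ, T δ m → T δ γ := by
    intro δ h
    rcases hmγ with h' | rfl
    · exact hT.rel_trans h h'
    · exact h
  have hb : ∀ δ, T δ m → δ < s := by
    intro δ h
    by_contra hc
    exact hmin δ ⟨Or.inl (hPm δ h), not_lt.1 hc⟩ (hT.lt_of_rel h)
  rcases eq_or_lt_of_le hsm with rfl | hsm'
  · -- m = s, so s is a genuine predecessor of γ
    rcases hmγ with h | rfl
    · exact h
    · exact absurd hsγ (lt_irrefl _)
  -- s < m : derive a contradiction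
  exfalso
  have hmθ : m < θ := lt_of_le_of_lt hmγ' (hγ.trans_le hlam)
  have ha : ∀ β ∈ Bset lam T, β < s → T β m := by
    intro β hβ hβs
    have hβγ : T β γ := hβ.2 γ (hβs.trans hsγ) hγ
    rcases hmγ with h | rfl
    · rcases hT.linear_pred hβγ h with rfl | h' | h'
      · exact absurd (hβs.trans hsm') (lt_irrefl _)
      · exact h'
      · exact absurd ((hT.lt_of_rel h').trans hβs) (not_lt.2 hsm'.le)
    · exact hβγ
  rcases Ordinal.zero_or_succ_or_isSuccLimit m with rfl | ⟨δ₀, rfl⟩ | hml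
  · exact absurd hsm' (not_lt_of_ge zero_le)
  · -- m = δ₀ + 1 : use succ_pred
    have h1 : δ₀ + 1 < θ := by rwa [Ordinal.add_one_eq_succ]
    obtain ⟨β₀, hβ₀, hmax⟩ := hT.succ_pred δ₀ h1
    have hβ₀m : T β₀ (Order.succ δ₀) := by rwa [Ordinal.add_one_eq_succ] at hβ₀
    have hβ₀s : β₀ < s := hb β₀ hβ₀m
    obtain ⟨β, hβB, hβ₀β, hβs⟩ := H β₀ hβ₀s
    have hβm : T β (δ₀ + 1) := by
      rw [Ordinal.add_one_eq_succ]; exact ha β hβB hβs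
    rcases hmax β hβm with rfl | h'
    · exact absurd hβ₀β (lt_irrefl _)
    · exact absurd (hT.lt_of_rel h') (not_lt.2 hβ₀β.le)
  · obtain ⟨δ, hsδ, hδm⟩ := hT.limit_cofinal m hmθ hml s hsm'
    exact absurd (hb δ hδm) (not_lt.2 hsδ)

/-- `Bset` is a cofinal branch. -/
lemma B_branch (hT : TreeOrder θ T) (hAL : AlmostLinear θ T) {lam : Ordinal}
    (hlam : lam ≤ θ) (hlim : Order.IsSuccLimit lam) :
    IsCofinalBranch lam T (Bset lam T) := by
  classical
  have h0 : 0 ∈ Bset lam T :=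
    ⟨hlim.pos, fun γ h1 h2 => hT.zero_rel γ h1 (h2.trans_le hlam)⟩
  refine ⟨fun α h => h.1, ?_, ?_, ?_⟩
  · intro α hα β hβ
    rcases lt_trichotomy α β with h | h | h
    · exact Or.inr (Or.inl (hα.2 β h hβ.1))
    · exact Or.inl h
    · exact Or.inr (Or.inr (hβ.2 α h hα.1))
  · intro α hα β hβα
    refine ⟨(hT.lt_of_rel hβα).trans hα.1, fun γ h1 h2 => ?_⟩
    rcases lt_trichotomy γ α with h | rfl | h
    · exact interval hT hAL α β γ hβα h1 h.le
    · exact hβα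
    · exact hT.rel_trans hβα (hα.2 γ h h2)
  · -- cofinality
    intro η hη
    by_contra hcon
    push_neg at hcon
    have hBne : (Bset lam T).Nonempty := ⟨0, h0⟩
    have hbdd : BddAbove (Bset lam T) := ⟨η, fun b hb => (hcon b hb).le⟩
    set s := sSup (Bset lam T) with hsdef
    have hsη : s ≤ η := csSup_le hBne fun b hb => (hcon b hb).le
    have hslam : s < lam := lt_of_le_of_lt hsη hη
    by_cases hsB : s ∈ Bset lam T
    · -- Case A: `s` is the maximum of `Bset`; use finiteness of immediate successors
      have hsmax : ∀ b ∈ Bset lam T, b ≤ s := fun b hb => le_csSup hbdd hb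
      have hIfin : {α : Ordinal | ImmPred T s α}.Finite := hAL.2 s
      set w : Ordinal → Ordinal := fun j =>
        if h : ∃ x, j < x ∧ x < lam ∧ ¬ T j x then h.choose else 0 with hwdef
      set K := {α : Ordinal | ImmPred T s α} ∩ Iio lam with hKdef
      have hKfin : K.Finite := hIfin.inter_of_left _
      set S := insert s (K ∪ w '' K) with hSdef
      have hSfin : S.Finite := ((hKfin.union (hKfin.image w)).insert s)
      have hSlam : ∀ x ∈ S, x < lam := by
        intro x hx
        rcases hx with rfl | hx | ⟨j, hj, rfl⟩
        · exact hslam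
        · exact hx.2
        · by_cases h : ∃ x, j < x ∧ x < lam ∧ ¬ T j x
          · have : w j = h.choose := by simp only [hwdef]; rw [dif_pos h]
            rw [this]; exact h.choose_spec.2.1
          · have : w j = 0 := by simp only [hwdef]; rw [dif_neg h]
            rw [this]; exact hlim.pos
      have hSne : S.Nonempty := ⟨s, mem_insert _ _⟩
      have huS : sSup S ∈ S := hSne.csSup_mem hSfin
      have hulam : sSup S < lam := hSlam _ huS
      have huγ : sSup S < sSup S + 1 := by
        rw [Ordinal.add_one_eq_succ]; exact Order.lt_succ _
      set γ := sSup S + 1 with hγdef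
      have hγlam : γ < lam := by
        rw [hγdef, Ordinal.add_one_eq_succ]; exact hlim.succ_lt hulam
      have hsu : s ≤ sSup S := le_csSup hSfin.bddAbove (mem_insert _ _)
      have hsγ : s < γ := lt_of_le_of_lt hsu huγ
      have hsγT : T s γ := hsB.2 γ hsγ hγlam
      set M : Set Ordinal := {δ | T s δ ∧ (T δ γ ∨ δ = γ)} with hMdef
      have hMne : M.Nonempty := ⟨γ, hsγT, Or.inr rfl⟩
      obtain ⟨j, hjM, hjmin⟩ : ∃ j ∈ M, ∀ δ ∈ M, ¬ δ < j :=
        ⟨_, Ordinal.lt_wf.min_mem M hMne, fun δ h => Ordinal.lt_wf.not_lt_min M h⟩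
      have hjImm : ImmPred T s j := by
        refine ⟨hjM.1, fun ε h1 h2 => ?_⟩
        refine hjmin ε ⟨h1, ?_⟩ (hT.lt_of_rel h2)
        rcases hjM.2 with h | rfl
        · exact Or.inl (hT.rel_trans h2 h)
        · exact Or.inl h2
      have hjγ : j ≤ γ := by
        rcases hjM.2 with h | rfl
        · exact (hT.lt_of_rel h).le
        · exact le_rfl
      have hjlam : j < lam := lt_of_le_of_lt hjγ hγlam
      have hjK : j ∈ K := ⟨hjImm, hjlam⟩
      have hju : j ≤ sSup S := le_csSup hSfin.bddAbove (mem_insert_of_mem _ (Or.inl hjK))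
      have hjγ' : T j γ := by
        rcases hjM.2 with h | rfl
        · exact h
        · exact absurd hju (not_le.2 huγ)
      have hjB : j ∈ Bset lam T := by
        refine ⟨hjlam, fun δ h1 h2 => ?_⟩
        by_contra hc
        have hex : ∃ x, j < x ∧ x < lam ∧ ¬ T j x := ⟨δ, h1, h2, hc⟩
        have hwj_eq : w j = hex.choose := by simp only [hwdef]; rw [dif_pos hex]
        have spec := hex.choose_spec
        have hwjS : w j ∈ S := mem_insert_of_mem _ (Or.inr ⟨j, hjK, rfl⟩)
        have hwju : w j ≤ sSup S := le_csSup hSfin.bddAbove hwjS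
        have h3 : ¬ T j (w j) := by rw [hwj_eq]; exact spec.2.2
        have h4 : j < w j := by rw [hwj_eq]; exact spec.1
        exact h3 (interval hT hAL γ j (w j) hjγ' h4 (hwju.trans huγ.le))
      exact absurd (hT.lt_of_rel hjM.1) (not_lt.2 (hsmax j hjB))
    · -- Case B: `s` is a limit of `Bset` from below; `key` gives `s ∈ Bset`
      have hs0 : 0 < s := by
        rcases (le_csSup hbdd h0).lt_or_eq with h | h
        · exact h
        · exfalso; exact hsB (by rw [hsdef, ← h]; exact h0)
      have H : ∀ η' < s, ∃ β ∈ Bset lam T, η' < β ∧ β < s := by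
        intro η' hη'
        obtain ⟨β, hβB, hβ⟩ := exists_lt_of_lt_csSup hBne hη'
        have hβs : β ≤ s := le_csSup hbdd hβB
        rcases hβs.lt_or_eq with h | rfl
        · exact ⟨β, hβB, hβ, h⟩
        · exact absurd hβB hsB
      exact hsB ⟨hslam, fun γ h1 h2 => key hT hAL hlam hs0 h1 h2 H⟩

/-- Every cofinal branch equals `Bset`. -/
lemma branch_eq (hT : TreeOrder θ T) (hAL : AlmostLinear θ T) {lam : Ordinal}
    (hlam : lam ≤ θ) (hlim : Order.IsSuccLimit lam)
    {b : Set Ordinal} (hb : IsCofinalBranch lam T b) : b = Bset lam T := by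
  obtain ⟨hb1, hb2, hb3, hb4⟩ := hb
  ext α
  constructor
  · intro hα
    refine ⟨hb1 α hα, fun γ h1 h2 => ?_⟩
    obtain ⟨γ', hγ'b, hγγ'⟩ := hb4 γ h2
    rcases hb2 α hα γ' hγ'b with rfl | h | h
    · exact absurd h1 (not_lt.2 hγγ')
    · rcases hγγ'.lt_or_eq with h' | rfl
      · exact interval hT hAL γ' α γ h h1 h'.le
      · exact h
    · exact absurd hγγ' (not_le.2 ((hT.lt_of_rel h).trans h1))
  · intro hα
    have h1 : α + 1 < lam := by
      rw [Ordinal.add_one_eq_succ]; exact hlim.succ_lt hα.1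
    obtain ⟨γ', hγ'b, hγ'⟩ := hb4 (α + 1) h1
    have hαγ' : α < γ' := by
      refine lt_of_lt_of_le ?_ hγ'
      rw [Ordinal.add_one_eq_succ]; exact Order.lt_succ α
    exact hb3 γ' hγ'b α (hα.2 γ' hαγ' (hb1 γ' hγ'b))

end Aux

/-- An almost linear tree order on `θ` has, below every limit
ordinal `lam ≤ θ`, exactly one cofinal branch; moreover that branch is closed
under taking the largest immediate successor and under limits along cofinal
subsets. -/
theorem almostLinear_unique_cofinal_branch
    (θ : Ordinal) (T : Ordinal → Ordinal → Prop)
    (hT : TreeOrder θ T) (hAL : AlmostLinear θ T)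
    (lam : Ordinal) (hlam : lam ≤ θ) (hlim : Order.IsSuccLimit lam) :
    (∃! b : Set Ordinal, IsCofinalBranch lam T b) ∧
    ∀ b : Set Ordinal, IsCofinalBranch lam T b →
      ((∀ i ∈ b, ∀ j, ImmPred T i j → j < lam →
          (∀ j', ImmPred T i j' → j' < lam → j' ≤ j) → j ∈ b) ∧
       (∀ ν, ν < lam → Order.IsSuccLimit ν →
          (∀ η < ν, ∃ β ∈ b, η < β ∧ T β ν) → ν ∈ b)) := by
  have hBr := B_branch hT hAL hlam hlim
  constructor
  · exact ⟨Bset lam T, hBr, fun b hb => branch_eq hT hAL hlam hlim hb⟩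
  · intro b hb
    have hbB := branch_eq hT hAL hlam hlim hb
    subst hbB
    constructor
    · -- closure under largest immediate successor
      intro i hi j hij hjlam hmax
      have hij' : i < j := hT.lt_of_rel hij.1
      have hj1 : j + 1 < lam := by
        rw [Ordinal.add_one_eq_succ]; exact hlim.succ_lt hjlam
      obtain ⟨β', hβ'B, hβ'⟩ := hBr.2.2.2 (j + 1) hj1
      have hjβ' : j < β' := by
        refine lt_of_lt_of_le ?_ hβ'
        rw [Ordinal.add_one_eq_succ]; exact Order.lt_succ j
      have hiβ' : T i β' := hi.2 β' (hij'.trans hjβ') (hBr.1 β' hβ'B)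
      set M : Set Ordinal := {δ | T i δ ∧ (T δ β' ∨ δ = β')} with hMdef
      have hMne : M.Nonempty := ⟨β', hiβ', Or.inr rfl⟩
      obtain ⟨j₀, hj₀M, hmin⟩ : ∃ j₀ ∈ M, ∀ δ ∈ M, ¬ δ < j₀ :=
        ⟨_, Ordinal.lt_wf.min_mem M hMne, fun δ h => Ordinal.lt_wf.not_lt_min M h⟩
      have hj₀Imm : ImmPred T i j₀ := by
        refine ⟨hj₀M.1, fun ε h1 h2 => ?_⟩
        refine hmin ε ⟨h1, ?_⟩ (hT.lt_of_rel h2)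
        rcases hj₀M.2 with h | rfl
        · exact Or.inl (hT.rel_trans h2 h)
        · exact Or.inl h2
      have hj₀B : j₀ ∈ Bset lam T := by
        rcases hj₀M.2 with h | rfl
        · exact hBr.2.2.1 β' hβ'B j₀ h
        · exact hβ'B
      have hle : j₀ ≤ j := hmax j₀ hj₀Imm hj₀B.1
      rcases hle.lt_or_eq with h | rfl
      · exact absurd (hj₀B.2 j h hjlam) (fun hh => hij.2 j₀ hj₀Imm.1 hh)
      · exact hj₀B
    · -- closure under limits along cofinal subsets
      intro ν hν hνl hyp
      refine ⟨hν, fun γ h1 h2 => ?_⟩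
      refine key hT hAL hlam hνl.pos h1 h2 ?_
      intro η hη
      obtain ⟨β, hβb, hηβ, hβν⟩ := hyp η hη
      exact ⟨β, hβb, hηβ, hT.lt_of_rel hβν⟩
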